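/- (General pairwise likelihood-comparison probability, Eq. (26).) Fix σ > 0, h ∈ ℂ with h ≠ 0, positive integers N_k, N, a transmitted composite symbol s₀ ∈ ℂ, and candidate symbols s₁, s₂, s_n ∈ ℂ with d := s₂ − s₁ + s_n ≠ 0. Let W_r and W_i be independent real random variables each distributed as a centered Gaussian with variance σ^2/2, let w = W_r + i·W_i, and let y = h s₀ + w. Define f_k(s₁) = (1/(π σ^2 N_k)) exp(−|y − h s₁|^2/σ^2) and f(s₂, s_n) = (1/(π σ^2 N)) exp(−|y − h(s₂ + s_n)|^2/σ^2). Then the probability of the event { f_k(s₁) < f(s₂, s_n) } equals Q( ( σ^2 ln(N/N_k) + |h|^2(|s₂ + s_n|^2 − |s₁|^2) − 2 Re{ |h|^2 s₀ · conj(d) } ) / sqrt( 2 σ^2 |h d|^2 ) ), where Q(x) = 1 − Φ(x) and Φ is the standard normal cumulative distribution function. -/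

import Mathlib

open MeasureTheory ProbabilityTheory Complex

open scoped NNReal ENNReal

section Aux
open Real
open scoped NNReal ENNReal

lemma gauss_pdf_conv_pt (v₁ v₂ : ℝ≥0) (h1 : v₁ ≠ 0) (h2 : v₂ ≠ 0) (t x : ℝ) :
    gaussianPDFReal 0 v₁ x * gaussianPDFReal x v₂ t
      = (gaussianPDFReal 0 (v₁ + v₂) t * (√(π / ((v₁ + v₂ : ℝ) / (2 * v₁ * v₂))))⁻¹)
        * rexp (-(((v₁ + v₂ : ℝ) / (2 * v₁ * v₂))) * (x - t * v₁ / (v₁ + v₂)) ^ 2) := by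
  have hv1 : (0:ℝ) < v₁ := lt_of_le_of_ne v₁.coe_nonneg (by exact_mod_cast (Ne.symm h1))
  have hv2 : (0:ℝ) < v₂ := lt_of_le_of_ne v₂.coe_nonneg (by exact_mod_cast (Ne.symm h2))
  have hπ : (0:ℝ) < π := pi_pos
  simp only [gaussianPDFReal, NNReal.coe_add]
  rw [mul_mul_mul_comm, ← Real.exp_add, mul_assoc (√(2 * π * ((v₁:ℝ) + v₂)))⁻¹, mul_comm (rexp _),
    ← mul_assoc (√(2 * π * ((v₁:ℝ) + v₂)))⁻¹, mul_assoc _ (rexp _), ← Real.exp_add]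
  congr 1
  · -- constants
    rw [← mul_inv, ← mul_inv, ← Real.sqrt_mul (by positivity), ← Real.sqrt_mul (by positivity)]
    congr 2
    field_simp
  · -- exponents
    congr 1
    field_simp
    ring

lemma gauss_pdf_conv_int (v₁ v₂ : ℝ≥0) (h1 : v₁ ≠ 0) (h2 : v₂ ≠ 0) (t : ℝ) :
    ∫ x, gaussianPDFReal 0 v₁ x * gaussianPDFReal x v₂ t
      = gaussianPDFReal 0 (v₁ + v₂) t := by
  have hv1 : (0:ℝ) < v₁ := lt_of_le_of_ne v₁.coe_nonneg (by exact_mod_cast (Ne.symm h1))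
  have hv2 : (0:ℝ) < v₂ := lt_of_le_of_ne v₂.coe_nonneg (by exact_mod_cast (Ne.symm h2))
  have hα : (0:ℝ) < (v₁ + v₂ : ℝ) / (2 * v₁ * v₂) := by positivity
  simp_rw [gauss_pdf_conv_pt v₁ v₂ h1 h2 t]
  rw [integral_const_mul]
  have : ∫ x, rexp (-((v₁ + v₂ : ℝ) / (2 * v₁ * v₂)) * (x - t * v₁ / (v₁ + v₂)) ^ 2)
      = √(π / ((v₁ + v₂ : ℝ) / (2 * v₁ * v₂))) := by
    rw [integral_sub_right_eq_self (fun x => rexp (-((v₁ + v₂ : ℝ) / (2 * v₁ * v₂)) * x ^ 2))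
      (t * v₁ / (v₁ + v₂))]
    exact integral_gaussian _
  rw [this, mul_assoc, inv_mul_cancel₀ (by positivity), mul_one]

lemma gauss_pdf_conv_lint (v₁ v₂ : ℝ≥0) (h1 : v₁ ≠ 0) (h2 : v₂ ≠ 0) (t : ℝ) :
    ∫⁻ x, gaussianPDF 0 v₁ x * gaussianPDF x v₂ t = gaussianPDF 0 (v₁ + v₂) t := by
  have hα : (0:ℝ) < (v₁ + v₂ : ℝ) / (2 * v₁ * v₂) := by
    have hv1 : (0:ℝ) < v₁ := lt_of_le_of_ne v₁.coe_nonneg (by exact_mod_cast (Ne.symm h1))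
    have hv2 : (0:ℝ) < v₂ := lt_of_le_of_ne v₂.coe_nonneg (by exact_mod_cast (Ne.symm h2))
    positivity
  have hint : Integrable (fun x => gaussianPDFReal 0 v₁ x * gaussianPDFReal x v₂ t) := by
    have : (fun x => gaussianPDFReal 0 v₁ x * gaussianPDFReal x v₂ t)
        = fun x => (gaussianPDFReal 0 (v₁ + v₂) t * (√(π / ((v₁ + v₂ : ℝ) / (2 * v₁ * v₂))))⁻¹)
          * rexp (-(((v₁ + v₂ : ℝ) / (2 * v₁ * v₂))) * (x - t * v₁ / (v₁ + v₂)) ^ 2) := by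
      ext x; exact gauss_pdf_conv_pt v₁ v₂ h1 h2 t x
    rw [this]
    exact ((integrable_exp_neg_mul_sq hα).comp_sub_right _).const_mul _
  simp_rw [gaussianPDF, ← ENNReal.ofReal_mul (gaussianPDFReal_nonneg 0 v₁ _)]
  rw [← ofReal_integral_eq_lintegral_ofReal hint
    (ae_of_all _ fun x => mul_nonneg (gaussianPDFReal_nonneg _ _ _) (gaussianPDFReal_nonneg _ _ _)),
    gauss_pdf_conv_int v₁ v₂ h1 h2 t]

lemma gaussianReal_map_add (v₁ v₂ : ℝ≥0) :
    Measure.map (fun p : ℝ × ℝ => p.1 + p.2) ((gaussianReal 0 v₁).prod (gaussianReal 0 v₂))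
      = gaussianReal 0 (v₁ + v₂) := by
  by_cases h1 : v₁ = 0
  · subst h1
    rw [gaussianReal_zero_var, Measure.dirac_prod, zero_add,
      Measure.map_map measurable_add measurable_prodMk_left]
    simp [Function.comp_def]
  by_cases h2 : v₂ = 0
  · subst h2
    rw [gaussianReal_zero_var, Measure.prod_dirac, add_zero,
      Measure.map_map measurable_add measurable_prodMk_right]
    simp [Function.comp_def]
  have hF2 : Measurable (fun p : ℝ × ℝ => gaussianPDF p.1 v₂ p.2) := by
    simp only [gaussianPDF, gaussianPDFReal]
    exact Measurable.ennreal_ofReal (by fun_prop)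
  have hF : Measurable (fun p : ℝ × ℝ => gaussianPDF 0 v₁ p.1 * gaussianPDF p.1 v₂ p.2) :=
    ((measurable_gaussianPDF 0 v₁).comp measurable_fst).mul hF2
  ext s hs
  rw [Measure.map_apply measurable_add hs,
    Measure.prod_apply (measurable_add hs)]
  have hsec : ∀ x : ℝ, (Prod.mk x ⁻¹' ((fun p : ℝ × ℝ => p.1 + p.2) ⁻¹' s))
      = (fun y => x + y) ⁻¹' s := fun x => rfl
  simp_rw [hsec]
  have hmeas : ∀ x : ℝ, gaussianReal 0 v₂ ((fun y => x + y) ⁻¹' s)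
      = ∫⁻ t in s, gaussianPDF x v₂ t := by
    intro x
    have := gaussianReal_map_const_add (μ := 0) (v := v₂) x
    rw [← Measure.map_apply (measurable_const_add x) hs,
      gaussianReal_map_const_add (μ := 0) (v := v₂) x, zero_add, gaussianReal_apply _ h2]
  simp_rw [hmeas]
  have hg : Measurable fun x => ∫⁻ t in s, gaussianPDF x v₂ t :=
    hF2.lintegral_prod_right' (ν := volume.restrict s)
  rw [gaussianReal_of_var_ne_zero _ h1,
    lintegral_withDensity_eq_lintegral_mul _ (measurable_gaussianPDF 0 v₁) hg]
  simp only [Pi.mul_apply]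
  have hpush : ∀ x : ℝ, gaussianPDF 0 v₁ x * ∫⁻ t in s, gaussianPDF x v₂ t
      = ∫⁻ t in s, gaussianPDF 0 v₁ x * gaussianPDF x v₂ t := fun x =>
    (lintegral_const_mul _ (measurable_gaussianPDF x v₂)).symm
  simp_rw [hpush]
  rw [lintegral_lintegral_swap (hF.aemeasurable)]
  have : ∀ t : ℝ, ∫⁻ x, gaussianPDF 0 v₁ x * gaussianPDF x v₂ t = gaussianPDF 0 (v₁ + v₂) t :=
    gauss_pdf_conv_lint v₁ v₂ h1 h2
  simp_rw [this]
  rw [gaussianReal_apply _ (by simp [h1]) s]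

lemma indep_gaussian_sum {Ω : Type*} [MeasurableSpace Ω] (μ : Measure Ω) [IsProbabilityMeasure μ]
    {U V : Ω → ℝ} (hU : Measurable U) (hV : Measurable V) {v₁ v₂ : ℝ≥0}
    (h1 : μ.map U = gaussianReal 0 v₁) (h2 : μ.map V = gaussianReal 0 v₂)
    (hUV : IndepFun U V μ) :
    μ.map (fun ω => U ω + V ω) = gaussianReal 0 (v₁ + v₂) := by
  have hprod : μ.map (fun ω => (U ω, V ω)) = (μ.map U).prod (μ.map V) :=
    (indepFun_iff_map_prod_eq_prod_map_map hU.aemeasurable hV.aemeasurable).mp hUV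
  have : (fun ω => U ω + V ω) = (fun p : ℝ × ℝ => p.1 + p.2) ∘ (fun ω => (U ω, V ω)) := rfl
  rw [this, ← Measure.map_map measurable_add (hU.prodMk hV), hprod, h1, h2,
    gaussianReal_map_add]

lemma gaussian_tail (v : ℝ≥0) (hv : v ≠ 0) (T : ℝ) :
    ((gaussianReal 0 v) (Set.Ioi T)).toReal = 1 - cdf (gaussianReal 0 1) (T / Real.sqrt v) := by
  have hvpos : (0:ℝ) < v := lt_of_le_of_ne v.coe_nonneg (by exact_mod_cast (Ne.symm hv))
  have hc : (0:ℝ) < Real.sqrt v := Real.sqrt_pos.mpr hvpos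
  have hmap : (gaussianReal 0 1).map (fun x => Real.sqrt v * x) = gaussianReal 0 v := by
    rw [gaussianReal_map_const_mul (Real.sqrt v)]
    congr 1
    · simp
    · ext
      simp [Real.sq_sqrt hvpos.le]
  rw [← hmap, Measure.map_apply (measurable_const_mul _) measurableSet_Ioi]
  have hpre : (fun x => Real.sqrt v * x) ⁻¹' (Set.Ioi T) = Set.Ioi (T / Real.sqrt v) := by
    ext x
    simp only [Set.mem_preimage, Set.mem_Ioi]
    rw [div_lt_iff₀ hc, mul_comm]
  rw [hpre, ← Set.compl_Iic, measure_compl measurableSet_Iic (measure_ne_top _ _),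
    measure_univ, ENNReal.toReal_sub_of_le prob_le_one ENNReal.one_ne_top, ENNReal.toReal_one,
    cdf_eq_real, measureReal_def]

end Aux

/-- (General pairwise likelihood-comparison probability, Eq. (26).)  A composite symbol
`s₀` is sent through channel `h` with circularly-symmetric complex Gaussian noise
`w = W_r + i W_i` of variance `σ²` (`W_r, W_i` independent real Gaussians of variance
`σ²/2`), giving `y = h s₀ + w`.  For candidate symbols `s₁, s₂, s_n` with
`d = s₂ − s₁ + s_n ≠ 0`, the probability that the SIC-hypothesis likelihood
`f(s₂, s_n) = (1/(πσ²N)) exp(−|y − h(s₂+s_n)|²/σ²)` exceeds the non-SIC-hypothesis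
likelihood `f_k(s₁) = (1/(πσ²N_k)) exp(−|y − h s₁|²/σ²)` equals
`Q((σ² ln(N/N_k) + |h|²(|s₂+s_n|² − |s₁|²) − 2 Re{|h|² s₀ conj(d)}) / √(2σ²|h d|²))`,
where `Q(x) = 1 − Φ(x)` with `Φ` the standard normal CDF. -/
theorem blind_classification_pairwise_error_probability
    {Ω : Type*} [MeasurableSpace Ω] (μ : Measure Ω) [IsProbabilityMeasure μ]
    (σ : ℝ) (hσ : 0 < σ) (h : ℂ) (hh : h ≠ 0)
    (Nk N : ℕ) (hNk : 0 < Nk) (hN : 0 < N)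
    (s₀ s₁ s₂ sn : ℂ) (hd : s₂ - s₁ + sn ≠ 0)
    (Wr Wi : Ω → ℝ) (hWr : Measurable Wr) (hWi : Measurable Wi)
    (hWrd : μ.map Wr = gaussianReal 0 (σ ^ 2 / 2).toNNReal)
    (hWid : μ.map Wi = gaussianReal 0 (σ ^ 2 / 2).toNNReal)
    (hindep : IndepFun Wr Wi μ) :
    (μ {ω : Ω |
        (1 / (Real.pi * σ ^ 2 * Nk)) *
            Real.exp
              (-‖(h * s₀ + (Wr ω + Wi ω * Complex.I)) - h * s₁‖ ^ 2 / σ ^ 2) <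
          (1 / (Real.pi * σ ^ 2 * N)) *
            Real.exp
              (-‖(h * s₀ + (Wr ω + Wi ω * Complex.I)) - h * (s₂ + sn)‖ ^ 2 /
                σ ^ 2)}).toReal =
      1 - (cdf (gaussianReal 0 1))
        ((σ ^ 2 * Real.log ((N : ℝ) / Nk) +
            ‖h‖ ^ 2 * (‖s₂ + sn‖ ^ 2 - ‖s₁‖ ^ 2) -
            2 * ((((‖h‖ : ℝ) : ℂ) ^ 2) * s₀ *
                (starRingEnd ℂ) (s₂ - s₁ + sn)).re) /
          Real.sqrt (2 * σ ^ 2 * ‖h * (s₂ - s₁ + sn)‖ ^ 2)) := by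

  have hπ := Real.pi_pos
  have hσ2 : (0:ℝ) < σ ^ 2 := by positivity
  have hNk' : (0:ℝ) < Nk := by exact_mod_cast hNk
  have hN' : (0:ℝ) < N := by exact_mod_cast hN
  set d : ℂ := s₂ - s₁ + sn with hddef
  have hhd : h * d ≠ 0 := mul_ne_zero hh hd
  have habs : 0 < ‖h * d‖ := norm_pos_iff.mpr hhd
  set a : ℝ := 2 * (h * d).re with ha
  set b : ℝ := 2 * (h * d).im with hb
  set V0 : ℝ≥0 := (σ ^ 2 / 2).toNNReal with hV0
  set v : ℝ≥0 := (a ^ 2).toNNReal * V0 + (b ^ 2).toNNReal * V0 with hvdef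
  have hvco : (v : ℝ) = 2 * σ ^ 2 * ‖h * d‖ ^ 2 := by
    rw [hvdef, NNReal.coe_add, NNReal.coe_mul, NNReal.coe_mul, hV0,
      Real.coe_toNNReal _ (by positivity : (0:ℝ) ≤ σ ^ 2 / 2),
      Real.coe_toNNReal _ (sq_nonneg a), Real.coe_toNNReal _ (sq_nonneg b),
      ha, hb, Complex.sq_norm, Complex.normSq_apply]
    ring
  have hvpos : (0:ℝ) < (v:ℝ) := by rw [hvco]; positivity
  have hvne : v ≠ 0 := by
    intro h0
    rw [h0] at hvpos
    simp at hvpos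
  set X : Ω → ℝ := fun ω => a * Wr ω + b * Wi ω with hX
  have hXmeas : Measurable X := (hWr.const_mul a).add (hWi.const_mul b)
  have hmapa : μ.map (fun ω => a * Wr ω) = gaussianReal 0 ((a ^ 2).toNNReal * V0) := by
    rw [show (fun ω => a * Wr ω) = (fun x => a * x) ∘ Wr from rfl,
      ← Measure.map_map (measurable_const_mul a) hWr, hWrd, gaussianReal_map_const_mul]
    congr 1
    · exact mul_zero a
    · congr 1
      ext1
      simp [Real.coe_toNNReal _ (sq_nonneg a)]
  have hmapb : μ.map (fun ω => b * Wi ω) = gaussianReal 0 ((b ^ 2).toNNReal * V0) := by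
    rw [show (fun ω => b * Wi ω) = (fun x => b * x) ∘ Wi from rfl,
      ← Measure.map_map (measurable_const_mul b) hWi, hWid, gaussianReal_map_const_mul]
    congr 1
    · exact mul_zero b
    · congr 1
      ext1
      simp [Real.coe_toNNReal _ (sq_nonneg b)]
  have hmapX : μ.map X = gaussianReal 0 v :=
    indep_gaussian_sum μ (hWr.const_mul a) (hWi.const_mul b) hmapa hmapb
      (hindep.comp (measurable_const_mul a) (measurable_const_mul b))
  set T : ℝ := σ ^ 2 * Real.log ((N:ℝ)/Nk) + ‖h*(s₀-(s₂+sn))‖^2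
      - ‖h*(s₀-s₁)‖^2 with hT
  have keyQ : ∀ x u : ℝ, ‖(h * s₀ + (↑x + ↑u * Complex.I)) - h * s₁‖ ^ 2
      - ‖(h * s₀ + (↑x + ↑u * Complex.I)) - h * (s₂ + sn)‖ ^ 2
      = (‖h*(s₀-s₁)‖^2 - ‖h*(s₀-(s₂+sn))‖^2) + a * x + b * u := by
    intro x u
    rw [ha, hb, hddef]
    simp only [Complex.sq_norm, Complex.normSq_apply, Complex.add_re, Complex.add_im,
      Complex.sub_re, Complex.sub_im, Complex.mul_re, Complex.mul_im, Complex.ofReal_re,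
      Complex.ofReal_im, Complex.I_re, Complex.I_im]
    ring
  have explt : ∀ c₁ c₂ A B : ℝ, 0 < c₁ → 0 < c₂ →
      (c₁ * Real.exp A < c₂ * Real.exp B ↔ Real.log c₁ + A < Real.log c₂ + B) := by
    intro c₁ c₂ A B h₁ h₂
    rw [show c₁ * Real.exp A = Real.exp (Real.log c₁ + A) by
        rw [Real.exp_add, Real.exp_log h₁],
      show c₂ * Real.exp B = Real.exp (Real.log c₂ + B) by
        rw [Real.exp_add, Real.exp_log h₂],
      Real.exp_lt_exp]
  have hc1 : (0:ℝ) < 1 / (Real.pi * σ ^ 2 * Nk) := by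
    apply div_pos one_pos
    exact mul_pos (mul_pos hπ hσ2) hNk'
  have hc2 : (0:ℝ) < 1 / (Real.pi * σ ^ 2 * N) := by
    apply div_pos one_pos
    exact mul_pos (mul_pos hπ hσ2) hN'
  have hlogs : Real.log (1 / (Real.pi * σ ^ 2 * Nk))
      = Real.log (1 / (Real.pi * σ ^ 2 * N)) + Real.log ((N:ℝ)/Nk) := by
    rw [← Real.log_mul hc2.ne' (by positivity)]
    congr 1
    field_simp
  have hmc : σ ^ 2 * Real.log ((N:ℝ)/Nk) = Real.log ((N:ℝ)/Nk) * σ ^ 2 := mul_comm _ _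
  have hset : {ω : Ω |
        (1 / (Real.pi * σ ^ 2 * Nk)) *
            Real.exp
              (-‖(h * s₀ + (Wr ω + Wi ω * Complex.I)) - h * s₁‖ ^ 2 / σ ^ 2) <
          (1 / (Real.pi * σ ^ 2 * N)) *
            Real.exp
              (-‖(h * s₀ + (Wr ω + Wi ω * Complex.I)) - h * (s₂ + sn)‖ ^ 2 /
                σ ^ 2)} = X ⁻¹' Set.Ioi T := by
    ext ω
    simp only [Set.mem_setOf_eq, Set.mem_preimage, Set.mem_Ioi, hX]
    rw [explt _ _ _ _ hc1 hc2, hlogs]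
    have hkey := keyQ (Wr ω) (Wi ω)
    simp only [neg_div]
    set Q1 : ℝ := ‖(h * s₀ + (↑(Wr ω) + ↑(Wi ω) * Complex.I)) - h * s₁‖ ^ 2 with hQ1
    set Q2 : ℝ := ‖(h * s₀ + (↑(Wr ω) + ↑(Wi ω) * Complex.I)) - h * (s₂ + sn)‖ ^ 2
      with hQ2
    constructor
    · intro hlt
      have h1 : Real.log ((N:ℝ)/Nk) < Q1 / σ ^ 2 - Q2 / σ ^ 2 := by linarith
      rw [div_sub_div_same] at h1
      have h2 := (lt_div_iff₀ hσ2).mp h1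
      rw [hT]
      linarith [h2, hkey, hmc]
    · intro hlt
      rw [hT] at hlt
      have h2 : Real.log ((N:ℝ)/Nk) * σ ^ 2 < Q1 - Q2 := by linarith [hkey, hmc]
      have h1 := (lt_div_iff₀ hσ2).mpr h2
      rw [← div_sub_div_same] at h1
      linarith
  rw [hset, ← Measure.map_apply hXmeas measurableSet_Ioi, hmapX, gaussian_tail v hvne T]
  have hTnum : T = σ ^ 2 * Real.log ((N : ℝ) / Nk) +
      ‖h‖ ^ 2 * (‖s₂ + sn‖ ^ 2 - ‖s₁‖ ^ 2) -
      2 * ((((‖h‖ : ℝ) : ℂ) ^ 2) * s₀ * (starRingEnd ℂ) d).re := by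
    rw [hT, hddef]
    simp only [← Complex.ofReal_pow, Complex.sq_norm, Complex.normSq_apply, Complex.add_re,
      Complex.add_im, Complex.sub_re, Complex.sub_im, Complex.mul_re, Complex.mul_im,
      Complex.ofReal_re, Complex.ofReal_im, Complex.conj_re, Complex.conj_im]
    ring
  rw [hvco, hTnum]
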